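/- Let t ∈ ℂ with t^3 ≠ 1 and t(t^3 + 8) = 0 (i.e., t = 0 or t^3 = −8). Then the cubic form g_t = t(α_0^3 + α_1^3 + α_2^3) − (t^3 + 2) α_0 α_1 α_2 ∈ ℂ[α_0, α_1, α_2] factors as a product g_t = ℓ_1 ℓ_2 ℓ_3 of three linear forms that are pairwise non-proportional and have no common zero in ℂ^3 ∖ {0}; that is, the Cayleyan curve of the Hesse cubic f_t decomposes into a union of three lines in general position. -/

import Mathlib

/-!
For `t³ ≠ 1` with `t(t³ + 8) = 0`, the Cayleyan cubic
`g_t = t(α₀³ + α₁³ + α₂³) − (t³ + 2) α₀α₁α₂` factors as a product of three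
linear forms which are pairwise non-proportional and have no common zero in
`ℂ³ ∖ {0}`: the Cayleyan curve is a union of three lines in general position.
-/

noncomputable section

open MvPolynomial

/-- The polynomial ring `ℂ[α₀, α₁, α₂]`. -/
abbrev PolyRing3 := MvPolynomial (Fin 3) ℂ

/-- The linear form with coefficient vector `c`. -/
def linForm (c : Fin 3 → ℂ) : PolyRing3 := ∑ j, C (c j) * X j

/-- The Cayleyan cubic `g_t = t(α₀³ + α₁³ + α₂³) − (t³ + 2) α₀α₁α₂`. -/
def cayleyanCubic (t : ℂ) : PolyRing3 :=
  C t * (X 0 ^ 3 + X 1 ^ 3 + X 2 ^ 3) - C (t ^ 3 + 2) * (X 0 * X 1 * X 2)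

/-- A primitive cube root of unity. -/
def omega3 : ℂ := (-1 + Complex.I * Real.sqrt 3) / 2

lemma sqrt3_sq : ((Real.sqrt 3 : ℝ) : ℂ) ^ 2 = 3 := by
  rw [← Complex.ofReal_pow, Real.sq_sqrt (by norm_num : (3:ℝ) ≥ 0)]; norm_num

lemma omega3_rel : omega3 ^ 2 + omega3 + 1 = 0 := by
  unfold omega3
  linear_combination (((Real.sqrt 3 : ℝ) : ℂ) ^ 2 / 4) * Complex.I_sq + ((-1 : ℂ)/4) * sqrt3_sq

lemma omega3_sub_sq_ne : omega3 - omega3 ^ 2 ≠ 0 := by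
  have h : omega3 - omega3 ^ 2 = Complex.I * Real.sqrt 3 := by
    unfold omega3
    linear_combination ((-1:ℂ)/4 * ((Real.sqrt 3 : ℝ) : ℂ)^2) * Complex.I_sq + ((1:ℂ)/4) * sqrt3_sq
  rw [h]
  apply mul_ne_zero Complex.I_ne_zero
  simp only [ne_eq, Complex.ofReal_eq_zero]
  positivity

/-- Linear independence of a pair in `Fin 3 → ℂ` from a nonvanishing 2×2 minor. -/
lemma li_of_minor (a b : Fin 3 → ℂ) (i j : Fin 3)
    (h : a i * b j - a j * b i ≠ 0) : LinearIndependent ℂ ![a, b] := by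
  rw [LinearIndependent.pair_iff]
  intro s u hsu
  have hi : s * a i + u * b i = 0 := by have := congrFun hsu i; simpa using this
  have hj : s * a j + u * b j = 0 := by have := congrFun hsu j; simpa using this
  constructor
  · have hs : s * (a i * b j - a j * b i) = 0 := by linear_combination b j * hi - b i * hj
    exact (mul_eq_zero.mp hs).resolve_right h
  · have hu : u * (a i * b j - a j * b i) = 0 := by linear_combination a i * hj - a j * hi
    exact (mul_eq_zero.mp hu).resolve_right h

theorem cayleyan_three_lines_general_position (t : ℂ) (ht : t ^ 3 ≠ 1)
    (hj : t * (t ^ 3 + 8) = 0) :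
    ∃ c : Fin 3 → (Fin 3 → ℂ),
      cayleyanCubic t = linForm (c 0) * linForm (c 1) * linForm (c 2) ∧
      (∀ i j, i ≠ j → LinearIndependent ℂ ![c i, c j]) ∧
      (∀ z : Fin 3 → ℂ, (∀ i, ∑ j, c i j * z j = 0) → z = 0) := by
  rcases mul_eq_zero.mp hj with ht0 | ht8
  · -- case t = 0 : g = -2 α₀α₁α₂
    subst ht0
    refine ⟨![![-2, 0, 0], ![0, 1, 0], ![0, 0, 1]], ?_, ?_, ?_⟩
    · apply MvPolynomial.funext
      intro x
      simp [cayleyanCubic, linForm, Fin.sum_univ_three]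
      ring
    · intro i j hij
      fin_cases i <;> fin_cases j <;> simp_all
      · exact li_of_minor _ _ 0 1 (by norm_num)
      · exact li_of_minor _ _ 0 2 (by simp)
      · exact li_of_minor _ _ 1 0 (by norm_num)
      · exact li_of_minor _ _ 1 2 (by simp)
      · exact li_of_minor _ _ 2 0 (by simp)
      · exact li_of_minor _ _ 2 1 (by simp)
    · intro z hz
      have h0 := hz 0
      have h1 := hz 1
      have h2 := hz 2
      simp [Fin.sum_univ_three] at h0 h1 h2
      funext k
      fin_cases k <;> simp_all
  · -- case t³ = -8
    set ω := omega3 with hωdef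
    have hw : ω ^ 2 + ω + 1 = 0 := omega3_rel
    have hωsub : ω - ω ^ 2 ≠ 0 := omega3_sub_sq_ne
    have ht0 : t ≠ 0 := by
      intro h; rw [h] at ht8; norm_num at ht8
    have hω1 : ω - 1 ≠ 0 := by
      intro h
      have : ω = 1 := by linear_combination h
      rw [this] at hw; norm_num at hw
    have hωp1 : ω + 1 ≠ 0 := by
      intro h
      have : ω = -1 := by linear_combination h
      rw [this] at hw; norm_num at hw
    refine ⟨![![t, -2, t], ![1, -2*ω/t, ω^2], ![1, -2*ω^2/t, ω]], ?_, ?_, ?_⟩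
    · apply MvPolynomial.funext
      intro x
      simp [cayleyanCubic, linForm, Fin.sum_univ_three]
      have h2 : t^2 ≠ 0 := pow_ne_zero 2 ht0
      apply mul_left_cancel₀ h2
      field_simp
      linear_combination (((-8)*(x 1) ^ 3 + 8*ω*(x 1) ^ 3 + (-4)*t*ω*(x 0)*(x 1) ^ 2 + (-4)*t*ω ^ 2*(x 1) ^ 2*(x 2) + 6*t ^ 2*(x 0)*(x 1)*(x 2) + 2*t ^ 2*(x 0) ^ 2*(x 1) + (-2)*t ^ 2*ω*(x 0)*(x 1)*(x 2) + 2*t ^ 2*ω ^ 2*(x 1)*(x 2) ^ 2 + 2*t ^ 2*ω ^ 2*(x 0)*(x 1)*(x 2) + t ^ 3*(x 2) ^ 3 + (-1)*t ^ 3*(x 0) ^ 2*(x 2) + (-1)*t ^ 3*ω*(x 2) ^ 3 + (-1)*t ^ 3*ω*(x 0)*(x 2) ^ 2)) * hw + (((x 1) ^ 3 - t ^ 2*(x 0)*(x 1)*(x 2))) * ht8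
    · intro i j hij
      fin_cases i <;> fin_cases j <;> simp_all
      · exact li_of_minor _ _ 0 2 (by
          simp only [Matrix.cons_val_zero, Matrix.cons_val_two, Matrix.tail_cons, Matrix.head_cons]
          intro h
          exact (mul_ne_zero ht0 (mul_ne_zero hω1 hωp1)) (by linear_combination h))
      · exact li_of_minor _ _ 0 2 (by
          simp only [Matrix.cons_val_zero, Matrix.cons_val_two, Matrix.tail_cons, Matrix.head_cons]
          intro h
          exact (mul_ne_zero ht0 hω1) (by linear_combination h))
      · exact li_of_minor _ _ 0 2 (by
          simp only [Matrix.cons_val_zero, Matrix.cons_val_two, Matrix.tail_cons, Matrix.head_cons]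
          intro h
          exact (mul_ne_zero ht0 (mul_ne_zero hω1 hωp1)) (by linear_combination -h))
      · exact li_of_minor _ _ 0 2 (by
          simp only [Matrix.cons_val_zero, Matrix.cons_val_two, Matrix.tail_cons, Matrix.head_cons]
          intro h
          exact hωsub (by linear_combination h))
      · exact li_of_minor _ _ 0 2 (by
          simp only [Matrix.cons_val_zero, Matrix.cons_val_two, Matrix.tail_cons, Matrix.head_cons]
          intro h
          exact (mul_ne_zero ht0 hω1) (by linear_combination -h))
      · exact li_of_minor _ _ 0 2 (by
          simp only [Matrix.cons_val_zero, Matrix.cons_val_two, Matrix.tail_cons, Matrix.head_cons]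
          intro h
          exact hωsub (by linear_combination -h))
    · intro z hz
      have h0 := hz 0
      have h1 := hz 1
      have h2 := hz 2
      simp [Fin.sum_univ_three] at h0 h1 h2
      have F1 : t * z 0 - 2*ω*z 1 + t*ω^2*z 2 = 0 := by
        field_simp at h1
        linear_combination h1
      have F2 : t * z 0 - 2*ω^2*z 1 + t*ω*z 2 = 0 := by
        field_simp at h2
        linear_combination h2
      have hz0 : z 0 = 0 := by
        have h30 : (3*t) * z 0 = 0 := by
          linear_combination h0 + F1 + F2 + (2 * z 1 - t * z 2) * hw
        have := mul_eq_zero.mp h30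
        rcases this with h | h
        · exact absurd h (by simpa using ht0)
        · exact h
      have hz2 : z 2 = 0 := by
        have hh : (t * (ω - ω^2)) * z 2 = 0 := by
          linear_combination ω * h0 - F1 - t*(ω-1)*hz0
        rcases mul_eq_zero.mp hh with h | h
        · exact absurd h (mul_ne_zero ht0 hωsub)
        · exact h
      have hz1 : z 1 = 0 := by
        have hh : (-2 : ℂ) * z 1 = 0 := by
          linear_combination h0 - t*hz0 - t*hz2
        rcases mul_eq_zero.mp hh with h | h
        · norm_num at h
        · exact h
      funext k
      fin_cases k <;> simp_all
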